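/- Let X = ∏ᵢ Xᵢ with each Xᵢ convex, hᵢ : Xᵢ → (0, ∞), and suppose each fᵢ := ln ∘ hᵢ is strongly star quasiconvex with modulus γ ≥ 0 with respect to x̄ᵢ ∈ argmin hᵢ. Let x̄ = (x̄₁,...,x̄ₘ) and H(x) = ∏ᵢ hᵢ(xᵢ). Then H is strongly star quasiconvex with modulus γ·H(x̄) with respect to x̄, which is a minimizer of H. -/

import Mathlib

theorem stmt_14 {m : ℕ} {n : Fin m → ℕ}
    (X : ∀ i, Set (EuclideanSpace ℝ (Fin (n i)))) (hX : ∀ i, Convex ℝ (X i))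
    (h : ∀ i, EuclideanSpace ℝ (Fin (n i)) → ℝ)
    (hpos : ∀ i, ∀ x ∈ X i, 0 < h i x)
    (γ : ℝ) (hγ : 0 ≤ γ)
    (xbar : ∀ i, EuclideanSpace ℝ (Fin (n i))) (hxbar : ∀ i, xbar i ∈ X i)
    (hamin : ∀ i, ∀ yi ∈ X i, h i (xbar i) ≤ h i yi)
    (hstar : ∀ i, ∀ yi ∈ X i, ∀ l ∈ Set.Icc (0:ℝ) 1,
      Real.log (h i (l • xbar i + (1 - l) • yi)) ≤
        Real.log (h i yi) - l * (1 - l) * (γ / 2) * ‖yi - xbar i‖ ^ 2) :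
    (∀ y : ∀ i, EuclideanSpace ℝ (Fin (n i)), (∀ i, y i ∈ X i) →
      ∏ i, h i (xbar i) ≤ ∏ i, h i (y i)) ∧
    (∀ y : ∀ i, EuclideanSpace ℝ (Fin (n i)), (∀ i, y i ∈ X i) →
      ∀ l ∈ Set.Icc (0:ℝ) 1,
        ∏ i, h i (l • xbar i + (1 - l) • y i) ≤
          ∏ i, h i (y i) -
            l * (1 - l) * ((γ * ∏ i, h i (xbar i)) / 2) * ∑ i, ‖y i - xbar i‖ ^ 2) := by
  constructor
  · intro y hy
    exact Finset.prod_le_prod (fun i _ => (hpos i _ (hxbar i)).le)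
      (fun i _ => hamin i _ (hy i))
  · intro y hy l hl
    have hzX : ∀ i, l • xbar i + (1 - l) • y i ∈ X i := fun i =>
      (hX i) (hxbar i) (hy i) hl.1 (by linarith [hl.2]) (by ring)
    have hzpos : ∀ i, 0 < h i (l • xbar i + (1 - l) • y i) := fun i => hpos i _ (hzX i)
    have hypos : ∀ i, 0 < h i (y i) := fun i => hpos i _ (hy i)
    have ha : 0 < ∏ i, h i (l • xbar i + (1 - l) • y i) :=
      Finset.prod_pos (fun i _ => hzpos i)
    have hb : 0 < ∏ i, h i (y i) := Finset.prod_pos (fun i _ => hypos i)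
    set a := ∏ i, h i (l • xbar i + (1 - l) • y i) with hadef
    set b := ∏ i, h i (y i) with hbdef
    set S := l * (1 - l) * (γ / 2) * ∑ i, ‖y i - xbar i‖ ^ 2 with hSdef
    have hlogs : Real.log a + S ≤ Real.log b := by
      have hla : Real.log a = ∑ i, Real.log (h i (l • xbar i + (1 - l) • y i)) :=
        Real.log_prod (fun i _ => (hzpos i).ne')
      have hlb : Real.log b = ∑ i, Real.log (h i (y i)) :=
        Real.log_prod (fun i _ => (hypos i).ne')
      have hS : S = ∑ i, l * (1 - l) * (γ / 2) * ‖y i - xbar i‖ ^ 2 :=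
        Finset.mul_sum _ _ _
      rw [hla, hlb, hS, ← Finset.sum_add_distrib]
      refine Finset.sum_le_sum (fun i _ => ?_)
      have := hstar i (y i) (hy i) l hl
      linarith
    have hexp : a * (Real.log b - Real.log a) ≤ b - a := by
      have h1 : Real.log (b / a) ≤ b / a - 1 := Real.log_le_sub_one_of_pos (div_pos hb ha)
      rw [Real.log_div hb.ne' ha.ne'] at h1
      have h2 := mul_le_mul_of_nonneg_left h1 ha.le
      have h3 : a * (b / a - 1) = b - a := by field_simp
      linarith
    have hSnn : 0 ≤ S := by
      have h1 : 0 ≤ ∑ i, ‖y i - xbar i‖ ^ 2 :=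
        Finset.sum_nonneg (fun i _ => by positivity)
      have h2 : 0 ≤ l * (1 - l) := mul_nonneg hl.1 (by linarith [hl.2])
      have : 0 ≤ l * (1 - l) * (γ / 2) := mul_nonneg h2 (by linarith)
      exact mul_nonneg this h1
    have hHa : ∏ i, h i (xbar i) ≤ a :=
      Finset.prod_le_prod (fun i _ => (hpos i _ (hxbar i)).le)
        (fun i _ => hamin i _ (hzX i))
    have hHnn : 0 ≤ ∏ i, h i (xbar i) :=
      Finset.prod_nonneg (fun i _ => (hpos i _ (hxbar i)).le)
    have key : (∏ i, h i (xbar i)) * S ≤ b - a :=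
      calc (∏ i, h i (xbar i)) * S ≤ a * S := mul_le_mul_of_nonneg_right hHa hSnn
        _ ≤ a * (Real.log b - Real.log a) :=
            mul_le_mul_of_nonneg_left (by linarith) ha.le
        _ ≤ b - a := hexp
    have heq : l * (1 - l) * ((γ * ∏ i, h i (xbar i)) / 2) * ∑ i, ‖y i - xbar i‖ ^ 2
        = (∏ i, h i (xbar i)) * S := by rw [hSdef]; ring
    linarith [key, heq.le, heq.ge]
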